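/- Define the linear operator Q⁻ := ½(b⁺∘f⁻ + f⁻∘b⁺) on V. Then for all integers m ≥ 0 and 0 ≤ n ≤ p: Q⁻φ_{m,n} = (−1)^{n−1} n φ_{m+1,n−1} + (−1)ⁿ n(n−1) ψ_{m+1,n−1}, and for all integers m ≥ 1 and 1 ≤ n ≤ p: Q⁻ψ_{m,n} = (−1)^{n−1} φ_{m+1,n−1} + (−1)ⁿ (n−1) ψ_{m+1,n−1}. Consequently Q⁻φ_{m,n} = n·(Q⁻ψ_{m,n}) for all m ≥ 1, 1 ≤ n ≤ p, and Q⁻∘Q⁻ = 0 as an operator on V. -/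

import Mathlib

open scoped BigOperators

/-- Indices of the basis vectors `φ_{m,n}`: pairs `(m,n)` of naturals with `n ≤ p`. -/
abbrev PhiIdx (p : ℕ) := {mn : ℕ × ℕ // mn.2 ≤ p}

/-- Indices of the basis vectors `ψ_{m,n}`: pairs `(m,n)` of naturals with
`1 ≤ m` and `1 ≤ n ≤ p - 1`. -/
abbrev PsiIdx (p : ℕ) := {mn : ℕ × ℕ // 1 ≤ mn.1 ∧ 1 ≤ mn.2 ∧ mn.2 + 1 ≤ p}

/-- The index set of the basis of the Fock-like carrier space. -/
abbrev FockIdx (p : ℕ) := PhiIdx p ⊕ PsiIdx p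

/-- The Fock-like carrier space: the free `ℂ`-vector space on the basis
`{φ_{m,n} : m ≥ 0, 0 ≤ n ≤ p} ∪ {ψ_{m,n} : m ≥ 1, 1 ≤ n ≤ p−1}`. -/
abbrev FockV (p : ℕ) := FockIdx p →₀ ℂ

/-- The vector `φ_{m,n}`, extended by `0` outside the range `m ≥ 0`, `0 ≤ n ≤ p`. -/
noncomputable def phi (p : ℕ) (m n : ℤ) : FockV p :=
  if h : 0 ≤ m ∧ 0 ≤ n ∧ n ≤ (p : ℤ) then
    Finsupp.single (Sum.inl ⟨(m.toNat, n.toNat), by show n.toNat ≤ p; omega⟩) 1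
  else 0

/-- The vector `ψ_{m,n}`, extended by the conventions `ψ_{m,0} = ψ_{0,n} = 0`,
`ψ_{m,p} = (1/p)·φ_{m,p}` (for `m ≥ 1`) and `ψ_{m,n} = 0` outside the range. -/
noncomputable def psi (p : ℕ) (m n : ℤ) : FockV p :=
  if h : 1 ≤ m ∧ 1 ≤ n ∧ n ≤ (p : ℤ) - 1 then
    Finsupp.single (Sum.inr ⟨(m.toNat, n.toNat),
      ⟨by show 1 ≤ m.toNat; omega, by show 1 ≤ n.toNat; omega,
       by show n.toNat + 1 ≤ p; omega⟩⟩) 1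
  else if 1 ≤ m ∧ n = (p : ℤ) then (1 / (p : ℂ)) • phi p m n
  else 0

/-- Image of the basis vector `φ_{m,n}` under `b⁺`. -/
noncomputable def bpPhi (p : ℕ) (m n : ℤ) : FockV p :=
  ((-1 : ℂ) ^ n) • phi p (m + 1) n - (2 * (n : ℂ) * (-1 : ℂ) ^ n) • psi p (m + 1) n

/-- Image of the basis vector `ψ_{m,n}` under `b⁺`. -/
noncomputable def bpPsi (p : ℕ) (m n : ℤ) : FockV p :=
  (-(-1 : ℂ) ^ n) • psi p (m + 1) n

/-- Image of the basis vector `φ_{m,n}` under `b⁻`. -/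
noncomputable def bmPhi (p : ℕ) (m n : ℤ) : FockV p :=
  if Even m then
    ((-1 : ℂ) ^ n * (m : ℂ)) • phi p (m - 1) n
      - (2 * (-1 : ℂ) ^ n * (n : ℂ) * (m : ℂ)) • psi p (m - 1) n
  else
    (-(-1 : ℂ) ^ n * (2 * (n : ℂ) - (m : ℂ) - ((p : ℂ) - 1))) • phi p (m - 1) n
      - (2 * (-1 : ℂ) ^ n * (n : ℂ) * ((m : ℂ) - 1)) • psi p (m - 1) n

/-- Image of the basis vector `ψ_{m,n}` under `b⁻`. -/
noncomputable def bmPsi (p : ℕ) (m n : ℤ) : FockV p :=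
  if Even m then
    (-(-1 : ℂ) ^ n) • phi p (m - 1) n
      + ((-1 : ℂ) ^ n * (2 * (n : ℂ) - (m : ℂ) - (p : ℂ))) • psi p (m - 1) n
  else
    (-(-1 : ℂ) ^ n) • phi p (m - 1) n
      - ((-1 : ℂ) ^ n * ((m : ℂ) - 1)) • psi p (m - 1) n

/-- Image of the basis vector `φ_{m,n}` under `f⁺`. -/
noncomputable def fpPhi (p : ℕ) (m n : ℤ) : FockV p := phi p m (n + 1)

/-- Image of the basis vector `ψ_{m,n}` under `f⁺`. -/
noncomputable def fpPsi (p : ℕ) (m n : ℤ) : FockV p := psi p m (n + 1)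

/-- Image of the basis vector `φ_{m,n}` under `f⁻`. -/
noncomputable def fmPhi (p : ℕ) (m n : ℤ) : FockV p :=
  ((n : ℂ) * ((p : ℂ) + 1 - (n : ℂ))) • phi p m (n - 1)

/-- Image of the basis vector `ψ_{m,n}` under `f⁻`. -/
noncomputable def fmPsi (p : ℕ) (m n : ℤ) : FockV p :=
  phi p m (n - 1) + (((n : ℂ) - 1) * ((p : ℂ) - (n : ℂ))) • psi p m (n - 1)

/-- The linear operator on the Fock-like space determined by its values `F m n`
on the basis vectors `φ_{m,n}` and `G m n` on the basis vectors `ψ_{m,n}`. -/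
noncomputable def mkOp (p : ℕ) (F G : ℤ → ℤ → FockV p) : Module.End ℂ (FockV p) :=
  Finsupp.lift (FockV p) ℂ (FockIdx p) fun x =>
    match x with
    | Sum.inl a => F (a.1.1 : ℤ) (a.1.2 : ℤ)
    | Sum.inr a => G (a.1.1 : ℤ) (a.1.2 : ℤ)

/-- The operator `b⁺`. -/
noncomputable def opBp (p : ℕ) : Module.End ℂ (FockV p) := mkOp p (bpPhi p) (bpPsi p)

/-- The operator `b⁻`. -/
noncomputable def opBm (p : ℕ) : Module.End ℂ (FockV p) := mkOp p (bmPhi p) (bmPsi p)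

/-- The operator `f⁺`. -/
noncomputable def opFp (p : ℕ) : Module.End ℂ (FockV p) := mkOp p (fpPhi p) (fpPsi p)

/-- The operator `f⁻`. -/
noncomputable def opFm (p : ℕ) : Module.End ℂ (FockV p) := mkOp p (fmPhi p) (fmPsi p)

/-- `b^ξ` for a sign `ξ`: `b 1 = b⁺`, `b (-1) = b⁻`. -/
noncomputable def opB (p : ℕ) (ξ : ℤ) : Module.End ℂ (FockV p) :=
  if ξ = 1 then opBp p else opBm p

/-- `f^ξ` for a sign `ξ`: `f 1 = f⁺`, `f (-1) = f⁻`. -/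
noncomputable def opF (p : ℕ) (ξ : ℤ) : Module.End ℂ (FockV p) :=
  if ξ = 1 then opFp p else opFm p

/-- The commutator `[X, Y] = X∘Y − Y∘X` of operators. -/
noncomputable def opComm {p : ℕ} (X Y : Module.End ℂ (FockV p)) : Module.End ℂ (FockV p) :=
  X * Y - Y * X

/-- The anticommutator `{X, Y} = X∘Y + Y∘X` of operators. -/
noncomputable def opAComm {p : ℕ} (X Y : Module.End ℂ (FockV p)) : Module.End ℂ (FockV p) :=
  X * Y + Y * X

/-- A sign, i.e. `+1` or `-1`, regarded as an integer. -/
def IsSign (x : ℤ) : Prop := x = 1 ∨ x = -1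

/-- The operator `Q⁻ := ½(b⁺∘f⁻ + f⁻∘b⁺)`. -/
noncomputable def opQm (p : ℕ) : Module.End ℂ (FockV p) :=
  (1 / 2 : ℂ) • (opBp p * opFm p + opFm p * opBp p)

open Finsupp in
lemma mkOp_single_inl (p : ℕ) (F G : ℤ → ℤ → FockV p) (a : PhiIdx p) :
    mkOp p F G (Finsupp.single (Sum.inl a) 1) = F a.1.1 a.1.2 := by
  simp [mkOp]

open Finsupp in
lemma mkOp_single_inr (p : ℕ) (F G : ℤ → ℤ → FockV p) (a : PsiIdx p) :
    mkOp p F G (Finsupp.single (Sum.inr a) 1) = G a.1.1 a.1.2 := by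
  simp [mkOp]

lemma phi_coe (p : ℕ) (m n : ℕ) (h : n ≤ p) :
    phi p (m : ℤ) (n : ℤ) = Finsupp.single (Sum.inl ⟨(m, n), h⟩) 1 := by
  rw [phi, dif_pos ⟨Int.natCast_nonneg m, Int.natCast_nonneg n, by exact_mod_cast h⟩]
  simp

lemma psi_coe (p : ℕ) (m n : ℕ) (hm : 1 ≤ m) (h1 : 1 ≤ n) (h2 : n + 1 ≤ p) :
    psi p (m : ℤ) (n : ℤ) = Finsupp.single (Sum.inr ⟨(m, n), hm, h1, h2⟩) 1 := by
  rw [psi, dif_pos ⟨by exact_mod_cast hm, by exact_mod_cast h1, by omega⟩]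
  simp

lemma phi_zero (p : ℕ) (m n : ℤ) (h : m < 0 ∨ n < 0 ∨ (p : ℤ) < n) : phi p m n = 0 := by
  rw [phi, dif_neg (by omega)]

lemma psi_zero (p : ℕ) (m n : ℤ) (h : m < 1 ∨ n < 0 ∨ (p : ℤ) < n) : psi p m n = 0 := by
  rw [psi, dif_neg (by omega), if_neg (by omega)]

lemma psi_zero' (p : ℕ) (hp : 1 ≤ p) (m n : ℤ) (h : m < 1 ∨ n < 1 ∨ (p : ℤ) < n) :
    psi p m n = 0 := by
  rw [psi, dif_neg (by omega), if_neg (by omega)]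

lemma psi_top (p : ℕ) (hp : 1 ≤ p) (m : ℤ) (hm : 1 ≤ m) :
    psi p m (p : ℤ) = (1 / (p : ℂ)) • phi p m (p : ℤ) := by
  rw [psi, dif_neg (by omega), if_pos ⟨hm, rfl⟩]
lemma opBp_phi (p : ℕ) (m n : ℤ) (hm : 0 ≤ m) : opBp p (phi p m n) = bpPhi p m n := by
  by_cases h : 0 ≤ n ∧ n ≤ (p : ℤ)
  · lift m to ℕ using hm
    lift n to ℕ using h.1
    rw [phi_coe p m n (by exact_mod_cast h.2), opBp, mkOp_single_inl]
  · rw [phi_zero p m n (by omega), map_zero, bpPhi,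
      phi_zero p _ n (by omega), psi_zero p _ n (by omega)]
    simp

lemma opBp_psi (p : ℕ) (hp : 1 ≤ p) (m n : ℤ) (hm : 1 ≤ m) :
    opBp p (psi p m n) = bpPsi p m n := by
  have hp0 : (p : ℂ) ≠ 0 := Nat.cast_ne_zero.mpr (by omega)
  by_cases h : 1 ≤ n ∧ n ≤ (p : ℤ) - 1
  · lift m to ℕ using by omega
    lift n to ℕ using by omega
    rw [psi_coe p m n (by exact_mod_cast hm) (by exact_mod_cast h.1) (by omega),
      opBp, mkOp_single_inr]
  · by_cases hn : n = (p : ℤ)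
    · subst hn
      rw [psi_top p hp m hm, map_smul, opBp_phi p m _ (by omega), bpPhi, bpPsi,
        psi_top p hp (m + 1) (by omega)]
      match_scalars
      field_simp
      ring
    · rw [psi_zero' p hp m n (by omega), map_zero, bpPsi,
        psi_zero' p hp (m + 1) n (by omega)]
      simp

lemma opFm_phi (p : ℕ) (m n : ℤ) (hm : 0 ≤ m) : opFm p (phi p m n) = fmPhi p m n := by
  by_cases h : 0 ≤ n ∧ n ≤ (p : ℤ)
  · lift m to ℕ using hm
    lift n to ℕ using h.1
    rw [phi_coe p m n (by exact_mod_cast h.2), opFm, mkOp_single_inl]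
  · by_cases hn : n = (p : ℤ) + 1
    · rw [phi_zero p m n (by omega), map_zero, fmPhi, hn]
      norm_num
    · rw [phi_zero p m n (by omega), map_zero, fmPhi, phi_zero p m (n - 1) (by omega)]
      simp

lemma opFm_psi (p : ℕ) (hp : 1 ≤ p) (m n : ℤ) (hm : 1 ≤ m) :
    opFm p (psi p m n) = fmPsi p m n := by
  have hp0 : (p : ℂ) ≠ 0 := Nat.cast_ne_zero.mpr (by omega)
  by_cases h : 1 ≤ n ∧ n ≤ (p : ℤ) - 1
  · lift m to ℕ using by omega
    lift n to ℕ using by omega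
    rw [psi_coe p m n (by exact_mod_cast hm) (by exact_mod_cast h.1) (by omega),
      opFm, mkOp_single_inr]
  · by_cases hn : n = (p : ℤ)
    · subst hn
      rw [psi_top p hp m hm, map_smul, opFm_phi p m _ (by omega), fmPhi, fmPsi]
      match_scalars
      all_goals (push_cast; try field_simp; try ring)
    · by_cases hn1 : n = (p : ℤ) + 1
      · subst hn1
        rw [psi_zero' p hp m ((p : ℤ) + 1) (by omega), map_zero, fmPsi]
        simp only [add_sub_cancel_right]
        rw [psi_top p hp m hm]
        match_scalars
        field_simp
        ring
      · rw [psi_zero' p hp m n (by omega), map_zero, fmPsi,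
          phi_zero p m (n - 1) (by omega), psi_zero' p hp m (n - 1) (by omega)]
        simp

lemma neg_one_zpow_sub_one (n : ℤ) : (-1 : ℂ) ^ (n - 1) = -(-1 : ℂ) ^ n := by
  rw [zpow_sub_one₀ (by norm_num : (-1 : ℂ) ≠ 0)]
  norm_num

lemma Qphi (p : ℕ) (hp : 1 ≤ p) (m n : ℤ) (hm : 0 ≤ m) :
    opQm p (phi p m n)
      = ((-1 : ℂ) ^ (n - 1) * (n : ℂ)) • phi p (m + 1) (n - 1)
        + ((-1 : ℂ) ^ n * (n : ℂ) * ((n : ℂ) - 1)) • psi p (m + 1) (n - 1) := by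
  rw [opQm]
  simp only [LinearMap.smul_apply, LinearMap.add_apply, Module.End.mul_apply]
  rw [opFm_phi p m n hm, opBp_phi p m n hm, fmPhi, bpPhi]
  simp only [map_sub, map_add, map_smul]
  rw [opBp_phi p m (n - 1) hm, opFm_phi p (m + 1) n (by omega),
    opFm_psi p hp (m + 1) n (by omega)]
  simp only [bpPhi, fmPhi, fmPsi, neg_one_zpow_sub_one]
  push_cast
  match_scalars <;> ring

lemma Qpsi (p : ℕ) (hp : 1 ≤ p) (m n : ℤ) (hm : 1 ≤ m) :
    opQm p (psi p m n)
      = ((-1 : ℂ) ^ (n - 1)) • phi p (m + 1) (n - 1)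
        + ((-1 : ℂ) ^ n * ((n : ℂ) - 1)) • psi p (m + 1) (n - 1) := by
  rw [opQm]
  simp only [LinearMap.smul_apply, LinearMap.add_apply, Module.End.mul_apply]
  rw [opFm_psi p hp m n hm, opBp_psi p hp m n hm, fmPsi, bpPsi]
  simp only [map_sub, map_add, map_smul, map_neg]
  rw [opBp_phi p m (n - 1) (by omega), opBp_psi p hp m (n - 1) hm,
    opFm_psi p hp (m + 1) n (by omega)]
  simp only [bpPhi, bpPsi, fmPsi, neg_one_zpow_sub_one]
  push_cast
  match_scalars <;> ring
/-- Action of `Q⁻` on the basis vectors, the proportionality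
`Q⁻φ_{m,n} = n·(Q⁻ψ_{m,n})`, and the nilpotency `(Q⁻)² = 0`. -/
theorem Qminus_action (p : ℕ) (hp : 1 ≤ p) :
    (∀ m n : ℤ, 0 ≤ m → 0 ≤ n → n ≤ (p : ℤ) →
      opQm p (phi p m n)
        = ((-1 : ℂ) ^ (n - 1) * (n : ℂ)) • phi p (m + 1) (n - 1)
          + ((-1 : ℂ) ^ n * (n : ℂ) * ((n : ℂ) - 1)) • psi p (m + 1) (n - 1)) ∧
    (∀ m n : ℤ, 1 ≤ m → 1 ≤ n → n ≤ (p : ℤ) →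
      opQm p (psi p m n)
        = ((-1 : ℂ) ^ (n - 1)) • phi p (m + 1) (n - 1)
          + ((-1 : ℂ) ^ n * ((n : ℂ) - 1)) • psi p (m + 1) (n - 1)) ∧
    (∀ m n : ℤ, 1 ≤ m → 1 ≤ n → n ≤ (p : ℤ) →
      opQm p (phi p m n) = (n : ℂ) • opQm p (psi p m n)) ∧
    opQm p * opQm p = 0 := by
  refine ⟨fun m n hm _ _ => Qphi p hp m n hm,
    fun m n hm _ _ => Qpsi p hp m n hm,
    fun m n hm hn _ => ?_, ?_⟩
  · rw [Qphi p hp m n (by omega), Qpsi p hp m n hm]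
    simp only [neg_one_zpow_sub_one]
    match_scalars <;> ring
  · have key : ∀ x : FockIdx p, opQm p (opQm p (Finsupp.single x 1)) = 0 := by
      rintro (⟨⟨m, n⟩, h⟩ | ⟨⟨m, n⟩, h1, h2, h3⟩)
      · rw [← phi_coe p m n h, Qphi p hp m n (Int.natCast_nonneg m), map_add, map_smul,
          map_smul, Qphi p hp _ _ (by omega), Qpsi p hp _ _ (by omega)]
        simp only [neg_one_zpow_sub_one]
        match_scalars <;> ring
      · rw [← psi_coe p m n h1 h2 h3, Qpsi p hp m n (by exact_mod_cast h1), map_add,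
          map_smul, map_smul, Qphi p hp _ _ (by omega), Qpsi p hp _ _ (by omega)]
        simp only [neg_one_zpow_sub_one]
        match_scalars <;> ring
    refine Finsupp.lhom_ext fun a b => ?_
    rw [Module.End.mul_apply, ← mul_one b, ← Finsupp.smul_single' b a 1, map_smul, map_smul,
      key, smul_zero, LinearMap.zero_apply]
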